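/- Assume the positivity condition: N ≥ 3 and θ_k ∈ (0,π) for all 1 ≤ k ≤ N with ∑_{k=1}^N θ_k = 2π. Let λ ∈ ℝ^{N−2} and set λ_{N−1} := vᵀλ, λ_N := wᵀλ. If λ_k > 0 for all 1 ≤ k ≤ N, or λ_k < 0 for all 1 ≤ k ≤ N, then Q(λ) > 0. -/

import Mathlib

/-- The cumulative angle `φ_k = ∑_{a=1}^k θ_a`. -/
noncomputable def phiAng (θ : ℕ → ℝ) (k : ℕ) : ℝ := ∑ a ∈ Finset.Icc 1 k, θ a

/-- The signed-area quadratic form `Q` on `ℝ^{N-2}` (coordinates indexed `1,…,N-2`). -/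
noncomputable def Qform (N : ℕ) (θ : ℕ → ℝ) (lam : ℕ → ℝ) : ℝ :=
  -(1/2) * ∑ j ∈ Finset.Icc 1 (N-2),
      Real.sin (phiAng θ N - phiAng θ j) * Real.sin (phiAng θ (N-1) - phiAng θ j)
        / Real.sin (θ N) * (lam j)^2
  - ∑ j ∈ Finset.Icc 1 (N-2), ∑ k ∈ Finset.Icc (j+1) (N-2),
      Real.sin (phiAng θ N - phiAng θ j) * Real.sin (phiAng θ (N-1) - phiAng θ k)
        / Real.sin (θ N) * (lam j * lam k)

/-- The vector `v`, `v_j = -sin(φ_N - φ_j)/sin(θ_N)`. -/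
noncomputable def vvec (N : ℕ) (θ : ℕ → ℝ) (j : ℕ) : ℝ :=
  -(Real.sin (phiAng θ N - phiAng θ j)) / Real.sin (θ N)

/-- The vector `w`, `w_j = sin(φ_{N-1} - φ_j)/sin(θ_N)`. -/
noncomputable def wvec (N : ℕ) (θ : ℕ → ℝ) (j : ℕ) : ℝ :=
  Real.sin (phiAng θ (N-1) - phiAng θ j) / Real.sin (θ N)

/-- The extended side lengths: `λ_k` for `k ≤ N-2`, `λ_{N-1} = vᵀλ`, `λ_N = wᵀλ`. -/
noncomputable def lamExt (N : ℕ) (θ : ℕ → ℝ) (lam : ℕ → ℝ) (k : ℕ) : ℝ :=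
  if k = N - 1 then ∑ j ∈ Finset.Icc 1 (N-2), vvec N θ j * lam j
  else if k = N then ∑ j ∈ Finset.Icc 1 (N-2), wvec N θ j * lam j
  else lam k

open Finset

private lemma sum_reorder (f : ℕ → ℕ → ℝ) :
    ∀ n : ℕ, (∑ j ∈ Icc 1 (n+1), ∑ k ∈ Icc (j+1) (n+1), f j k)
      = ∑ m ∈ Icc 1 n, ∑ k ∈ Icc 1 m, f k (m+1)
  | 0 => by
      rw [Finset.Icc_self]
      simp [Finset.Icc_eq_empty (by omega : ¬ (1+1:ℕ) ≤ 1)]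
  | (n+1) => by
      have hL : (∑ j ∈ Icc 1 (n+1+1), ∑ k ∈ Icc (j+1) (n+1+1), f j k)
          = (∑ j ∈ Icc 1 (n+1), ∑ k ∈ Icc (j+1) (n+1), f j k)
            + ∑ j ∈ Icc 1 (n+1), f j (n+1+1) := by
        rw [Finset.sum_Icc_succ_top (by omega : (1:ℕ) ≤ n+1+1),
            Finset.Icc_eq_empty (by omega : ¬ (n+1+1+1:ℕ) ≤ n+1+1), Finset.sum_empty, add_zero,
            Finset.sum_congr rfl (fun j hj => Finset.sum_Icc_succ_top
              (by simp [Finset.mem_Icc] at hj; omega : j+1 ≤ n+1+1) (fun k => f j k)),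
            Finset.sum_add_distrib]
      rw [hL, sum_reorder f n,
          Finset.sum_Icc_succ_top (by omega : (1:ℕ) ≤ n+1) (fun m => ∑ k ∈ Icc 1 m, f k (m+1))]

private lemma sum_sq_split (f : ℕ → ℕ → ℝ) :
    ∀ n : ℕ, (∑ j ∈ Icc 1 n, ∑ k ∈ Icc 1 n, f j k)
      = (∑ j ∈ Icc 1 n, f j j) + ∑ j ∈ Icc 1 n, ∑ k ∈ Icc (j+1) n, (f j k + f k j)
  | 0 => by simp
  | (n+1) => by
      have hL : (∑ j ∈ Icc 1 (n+1), ∑ k ∈ Icc 1 (n+1), f j k)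
          = ((∑ j ∈ Icc 1 n, ∑ k ∈ Icc 1 n, f j k)
              + ∑ j ∈ Icc 1 n, f j (n+1))
            + ((∑ k ∈ Icc 1 n, f (n+1) k) + f (n+1) (n+1)) := by
        rw [Finset.sum_Icc_succ_top (by omega : (1:ℕ) ≤ n+1)
              (fun j => ∑ k ∈ Icc 1 (n+1), f j k),
            Finset.sum_Icc_succ_top (by omega : (1:ℕ) ≤ n+1) (fun k => f (n+1) k),
            Finset.sum_congr rfl (fun j _ => Finset.sum_Icc_succ_top
              (by omega : (1:ℕ) ≤ n+1) (fun k => f j k)),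
            Finset.sum_add_distrib]
      have hR : (∑ j ∈ Icc 1 (n+1), ∑ k ∈ Icc (j+1) (n+1), (f j k + f k j))
          = (∑ j ∈ Icc 1 n, ∑ k ∈ Icc (j+1) n, (f j k + f k j))
            + ∑ j ∈ Icc 1 n, (f j (n+1) + f (n+1) j) := by
        rw [Finset.sum_Icc_succ_top (by omega : (1:ℕ) ≤ n+1)
              (fun j => ∑ k ∈ Icc (j+1) (n+1), (f j k + f k j)),
            Finset.Icc_eq_empty (by omega : ¬ (n+1+1:ℕ) ≤ n+1), Finset.sum_empty, add_zero,
            Finset.sum_congr rfl (fun j hj => Finset.sum_Icc_succ_top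
              (by simp [Finset.mem_Icc] at hj; omega : j+1 ≤ n+1)
              (fun k => f j k + f k j)),
            Finset.sum_add_distrib]
      rw [hL, hR, sum_sq_split f n,
          Finset.sum_Icc_succ_top (by omega : (1:ℕ) ≤ n+1) (fun j => f j j),
          Finset.sum_add_distrib]
      ring

private lemma main_pos (n : ℕ) (hn : 1 ≤ n) (θ lam : ℕ → ℝ)
    (hθ : ∀ k, 1 ≤ k → k ≤ n+2 → θ k ∈ Set.Ioo 0 Real.pi)
    (hsum : ∑ k ∈ Icc 1 (n+2), θ k = 2 * Real.pi)
    (hlam : ∀ k, 1 ≤ k → k ≤ n+2 → 0 < lamExt (n+2) θ lam k) :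
    0 < Qform (n+2) θ lam := by
  have h21 : n+2-1 = n+1 := rfl
  have h22 : n+2-2 = n := rfl
  have hs : 0 < Real.sin (θ (n+2)) :=
    Real.sin_pos_of_pos_of_lt_pi (hθ (n+2) (by omega) le_rfl).1 (hθ (n+2) (by omega) le_rfl).2
  -- cumulative sums
  have hsub : ∀ j k : ℕ, j ≤ k → phiAng θ j + ∑ a ∈ Ioc j k, θ a = phiAng θ k := by
    intro j k hjk
    have h0 : ∀ m : ℕ, phiAng θ m = ∑ a ∈ Ioc 0 m, θ a := by
      intro m; rw [phiAng, ← Finset.Icc_add_one_left_eq_Ioc]; rfl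
    rw [h0, h0]
    exact Finset.sum_Ioc_consecutive θ (Nat.zero_le j) hjk
  have hposd : ∀ j k : ℕ, j < k → k ≤ n+2 → 0 < phiAng θ k - phiAng θ j := by
    intro j k hjk hk
    have := hsub j k hjk.le
    have hpos : 0 < ∑ a ∈ Ioc j k, θ a := by
      apply Finset.sum_pos
      · intro a ha
        simp only [Finset.mem_Ioc] at ha
        exact (hθ a (by omega) (by omega)).1
      · exact ⟨k, by simp [Finset.mem_Ioc, hjk]⟩
    linarith
  have hmono : ∀ j k : ℕ, j ≤ k → k ≤ n+2 → phiAng θ j ≤ phiAng θ k := by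
    intro j k hjk hk
    have := hsub j k hjk
    have hpos : 0 ≤ ∑ a ∈ Ioc j k, θ a := by
      apply Finset.sum_nonneg
      intro a ha
      simp only [Finset.mem_Ioc] at ha
      exact (hθ a (by omega) (by omega)).1.le
    linarith
  have htop : phiAng θ (n+2) = 2 * Real.pi := hsum
  have hphi0 : phiAng θ 0 = 0 := by simp [phiAng]
  have keystep : ∀ m : ℕ, phiAng θ (m+1) - phiAng θ m = θ (m+1) := by
    intro m
    have := hsub m (m+1) (by omega)
    have hIoc : Ioc m (m+1) = {m+1} := by
      ext x; simp only [Finset.mem_Ioc, Finset.mem_singleton]; omega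
    rw [hIoc, Finset.sum_singleton] at this
    linarith
  have keyW : ∀ j, Real.sin (phiAng θ (n+1) - phiAng θ j) = Real.sin (θ (n+2)) * wvec (n+2) θ j := by
    intro j; rw [wvec, h21]; field_simp
  have keyV : ∀ j, Real.sin (phiAng θ (n+2) - phiAng θ j) = -(Real.sin (θ (n+2)) * vvec (n+2) θ j) := by
    intro j; rw [vvec]; field_simp
  have keyS : Real.sin (phiAng θ (n+2) - phiAng θ (n+1)) = Real.sin (θ (n+2)) := by
    rw [keystep (n+1)]
  have keyJK : ∀ j k : ℕ, Real.sin (phiAng θ k - phiAng θ j)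
      = Real.sin (θ (n+2)) * (vvec (n+2) θ j * wvec (n+2) θ k - vvec (n+2) θ k * wvec (n+2) θ j) := by
    intro j k
    have hid : Real.sin (phiAng θ k - phiAng θ j) * Real.sin (phiAng θ (n+2) - phiAng θ (n+1))
        = -(Real.sin (phiAng θ (n+2) - phiAng θ j) * Real.sin (phiAng θ (n+1) - phiAng θ k))
          + Real.sin (phiAng θ (n+2) - phiAng θ k) * Real.sin (phiAng θ (n+1) - phiAng θ j) := by
      simp only [Real.sin_sub]; ring
    rw [keyS, keyV j, keyV k, keyW j, keyW k] at hid
    apply mul_right_cancel₀ hs.ne'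
    rw [hid]; ring
  -- values of lamExt
  have hmuj : ∀ j, 1 ≤ j → j ≤ n → lamExt (n+2) θ lam j = lam j := by
    intro j h1 h2
    rw [lamExt, if_neg (by omega), if_neg (by omega)]
  have hmu1 : lamExt (n+2) θ lam (n+1) = ∑ j ∈ Icc 1 n, vvec (n+2) θ j * lam j := by
    rw [lamExt, if_pos (by omega), h22]
  have hmu2 : lamExt (n+2) θ lam (n+2) = ∑ j ∈ Icc 1 n, wvec (n+2) θ j * lam j := by
    rw [lamExt, if_neg (by omega), if_pos rfl, h22]
  set μ := lamExt (n+2) θ lam with hmudef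
  -- closure
  have hpeel : ∀ g : ℕ → ℝ, ∑ k ∈ Icc 1 (n+2), g k
      = (∑ k ∈ Icc 1 n, g k) + g (n+1) + g (n+2) := by
    intro g
    rw [Finset.sum_Icc_succ_top (by omega : (1:ℕ) ≤ n+2),
        Finset.sum_Icc_succ_top (by omega : (1:ℕ) ≤ n+1)]
  have hC : ∑ k ∈ Icc 1 (n+2), μ k * Real.cos (phiAng θ k) = 0 := by
    rw [hpeel, hmu1, hmu2, Finset.sum_mul, Finset.sum_mul,
        ← Finset.sum_add_distrib, ← Finset.sum_add_distrib]
    apply Finset.sum_eq_zero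
    intro j hj
    simp only [Finset.mem_Icc] at hj
    rw [hmuj j hj.1 hj.2, vvec, wvec, h21]
    field_simp
    rw [← keystep (n+1)]
    simp only [Real.sin_sub]
    ring
  have hS : ∑ k ∈ Icc 1 (n+2), μ k * Real.sin (phiAng θ k) = 0 := by
    rw [hpeel, hmu1, hmu2, Finset.sum_mul, Finset.sum_mul,
        ← Finset.sum_add_distrib, ← Finset.sum_add_distrib]
    apply Finset.sum_eq_zero
    intro j hj
    simp only [Finset.mem_Icc] at hj
    rw [hmuj j hj.1 hj.2, vvec, wvec, h21]
    field_simp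
    rw [← keystep (n+1)]
    simp only [Real.sin_sub]
    ring
  have hDir : ∀ m : ℕ, ∑ k ∈ Icc 1 (n+2), μ k * Real.sin (phiAng θ m - phiAng θ k) = 0 := by
    intro m
    have hcongr : ∀ k ∈ Icc 1 (n+2), μ k * Real.sin (phiAng θ m - phiAng θ k)
        = Real.sin (phiAng θ m) * (μ k * Real.cos (phiAng θ k))
          - Real.cos (phiAng θ m) * (μ k * Real.sin (phiAng θ k)) := by
      intro k _; rw [Real.sin_sub]; ring
    rw [Finset.sum_congr rfl hcongr, Finset.sum_sub_distrib, ← Finset.mul_sum, ← Finset.mul_sum,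
        hC, hS]
    ring
  -- the three atom sums
  set D := ∑ j ∈ Icc 1 n, vvec (n+2) θ j * wvec (n+2) θ j * (lam j)^2 with hD
  set E := ∑ j ∈ Icc 1 n, ∑ k ∈ Icc (j+1) n,
      vvec (n+2) θ j * wvec (n+2) θ k * (lam j * lam k) with hE
  set F := ∑ j ∈ Icc 1 n, ∑ k ∈ Icc (j+1) n,
      vvec (n+2) θ k * wvec (n+2) θ j * (lam j * lam k) with hF
  -- Qform in terms of D, E
  have h3 : Qform (n+2) θ lam
      = 1/2 * Real.sin (θ (n+2)) * D + Real.sin (θ (n+2)) * E := by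
    have t1 : ∀ j ∈ Icc 1 n,
        Real.sin (phiAng θ (n+2) - phiAng θ j) * Real.sin (phiAng θ (n+1) - phiAng θ j)
          / Real.sin (θ (n+2)) * (lam j)^2
        = -(Real.sin (θ (n+2)) * (vvec (n+2) θ j * wvec (n+2) θ j * (lam j)^2)) := by
      intro j _
      rw [keyV j, keyW j]
      field_simp
    have t2 : ∀ j ∈ Icc 1 n,
        (∑ k ∈ Icc (j+1) n,
          Real.sin (phiAng θ (n+2) - phiAng θ j) * Real.sin (phiAng θ (n+1) - phiAng θ k)
            / Real.sin (θ (n+2)) * (lam j * lam k))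
        = -(∑ k ∈ Icc (j+1) n,
            Real.sin (θ (n+2)) * (vvec (n+2) θ j * wvec (n+2) θ k * (lam j * lam k))) := by
      intro j _
      rw [← Finset.sum_neg_distrib]
      apply Finset.sum_congr rfl
      intro k _
      rw [keyV j, keyW k]
      field_simp
    have hsD : Real.sin (θ (n+2)) * D
        = ∑ j ∈ Icc 1 n, Real.sin (θ (n+2)) * (vvec (n+2) θ j * wvec (n+2) θ j * (lam j)^2) :=
      Finset.mul_sum _ _ _
    have hsE : Real.sin (θ (n+2)) * E
        = ∑ j ∈ Icc 1 n, ∑ k ∈ Icc (j+1) n,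
            Real.sin (θ (n+2)) * (vvec (n+2) θ j * wvec (n+2) θ k * (lam j * lam k)) := by
      rw [Finset.mul_sum]
      exact Finset.sum_congr rfl fun j _ => Finset.mul_sum _ _ _
    rw [Qform, h21, h22, Finset.sum_congr rfl t1, Finset.sum_congr rfl t2,
        Finset.sum_neg_distrib, Finset.sum_neg_distrib, ← hsD, ← hsE]
    ring
  -- the pair-sum P
  have h1 : (∑ j ∈ Icc 1 (n+2), ∑ k ∈ Icc (j+1) (n+2),
        μ j * μ k * Real.sin (phiAng θ k - phiAng θ j))
      = Real.sin (θ (n+2)) * (E - F) + Real.sin (θ (n+2)) * (μ (n+1) * μ (n+2)) := by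
    rw [hpeel (fun j => ∑ k ∈ Icc (j+1) (n+2), μ j * μ k * Real.sin (phiAng θ k - phiAng θ j))]
    have piece3 : (∑ k ∈ Icc (n+2+1) (n+2), μ (n+2) * μ k * Real.sin (phiAng θ k - phiAng θ (n+2))) = 0 := by
      rw [Finset.Icc_eq_empty (by omega), Finset.sum_empty]
    have piece2 : (∑ k ∈ Icc (n+1+1) (n+2), μ (n+1) * μ k * Real.sin (phiAng θ k - phiAng θ (n+1)))
        = Real.sin (θ (n+2)) * (μ (n+1) * μ (n+2)) := by
      have : Icc (n+1+1) (n+2) = {n+2} := by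
        ext x; simp only [Finset.mem_Icc, Finset.mem_singleton]; omega
      rw [this, Finset.sum_singleton, keyS]
      ring
    have inner : ∀ j ∈ Icc 1 n,
        (∑ k ∈ Icc (j+1) (n+2), μ j * μ k * Real.sin (phiAng θ k - phiAng θ j))
        = ((∑ k ∈ Icc (j+1) n,
              (Real.sin (θ (n+2)) * (vvec (n+2) θ j * wvec (n+2) θ k * (lam j * lam k))
               - Real.sin (θ (n+2)) * (vvec (n+2) θ k * wvec (n+2) θ j * (lam j * lam k))))
            + ((Real.sin (θ (n+2)) * μ (n+1)) * (wvec (n+2) θ j * lam j)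
               + (-(Real.sin (θ (n+2)) * μ (n+2))) * (vvec (n+2) θ j * lam j))) := by
      intro j hj
      simp only [Finset.mem_Icc] at hj
      rw [Finset.sum_Icc_succ_top (by omega : j+1 ≤ n+2),
          Finset.sum_Icc_succ_top (by omega : j+1 ≤ n+1)]
      have e1 : (∑ k ∈ Icc (j+1) n, μ j * μ k * Real.sin (phiAng θ k - phiAng θ j))
          = ∑ k ∈ Icc (j+1) n,
              (Real.sin (θ (n+2)) * (vvec (n+2) θ j * wvec (n+2) θ k * (lam j * lam k))
               - Real.sin (θ (n+2)) * (vvec (n+2) θ k * wvec (n+2) θ j * (lam j * lam k))) := by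
        apply Finset.sum_congr rfl
        intro k hk
        simp only [Finset.mem_Icc] at hk
        rw [hmuj j hj.1 hj.2, hmuj k (by omega) hk.2, keyJK j k]
        ring
      rw [e1, hmuj j hj.1 hj.2, keyW j, keyV j]
      ring
    rw [Finset.sum_congr rfl inner, piece2, piece3]
    have hsplit : (∑ j ∈ Icc 1 n, ∑ k ∈ Icc (j+1) n,
          (Real.sin (θ (n+2)) * (vvec (n+2) θ j * wvec (n+2) θ k * (lam j * lam k))
           - Real.sin (θ (n+2)) * (vvec (n+2) θ k * wvec (n+2) θ j * (lam j * lam k))))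
        = (∑ j ∈ Icc 1 n, ∑ k ∈ Icc (j+1) n,
            Real.sin (θ (n+2)) * (vvec (n+2) θ j * wvec (n+2) θ k * (lam j * lam k)))
          - (∑ j ∈ Icc 1 n, ∑ k ∈ Icc (j+1) n,
            Real.sin (θ (n+2)) * (vvec (n+2) θ k * wvec (n+2) θ j * (lam j * lam k))) := by
      rw [← Finset.sum_sub_distrib]
      exact Finset.sum_congr rfl fun j _ => Finset.sum_sub_distrib _ _
    rw [Finset.sum_add_distrib, Finset.sum_add_distrib, hsplit, ← Finset.mul_sum,
        ← Finset.mul_sum, ← hmu2, ← hmu1]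
    have hsE : Real.sin (θ (n+2)) * E
        = ∑ j ∈ Icc 1 n, ∑ k ∈ Icc (j+1) n,
            Real.sin (θ (n+2)) * (vvec (n+2) θ j * wvec (n+2) θ k * (lam j * lam k)) := by
      rw [Finset.mul_sum]
      exact Finset.sum_congr rfl fun j _ => Finset.mul_sum _ _ _
    have hsF : Real.sin (θ (n+2)) * F
        = ∑ j ∈ Icc 1 n, ∑ k ∈ Icc (j+1) n,
            Real.sin (θ (n+2)) * (vvec (n+2) θ k * wvec (n+2) θ j * (lam j * lam k)) := by
      rw [Finset.mul_sum]
      exact Finset.sum_congr rfl fun j _ => Finset.mul_sum _ _ _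
    rw [← hsE, ← hsF]
    ring
  -- the quadratic expansion of μ (n+1) * μ (n+2)
  have h2 : μ (n+1) * μ (n+2) = D + (E + F) := by
    rw [hmu1, hmu2, Finset.sum_mul_sum,
        sum_sq_split (fun j k => (vvec (n+2) θ j * lam j) * (wvec (n+2) θ k * lam k)) n]
    congr 1
    · apply Finset.sum_congr rfl
      intro j _
      ring
    · rw [← Finset.sum_add_distrib]
      apply Finset.sum_congr rfl
      intro j _
      rw [← Finset.sum_add_distrib]
      apply Finset.sum_congr rfl
      intro k _
      ring
  have hP1 : (∑ j ∈ Icc 1 (n+2), ∑ k ∈ Icc (j+1) (n+2),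
        μ j * μ k * Real.sin (phiAng θ k - phiAng θ j))
      = 2 * Qform (n+2) θ lam := by
    linear_combination h1 + Real.sin (θ (n+2)) * h2 - 2 * h3
  -- reorder to fan form
  have hP2 : (∑ j ∈ Icc 1 (n+2), ∑ k ∈ Icc (j+1) (n+2),
        μ j * μ k * Real.sin (phiAng θ k - phiAng θ j))
      = ∑ m ∈ Icc 1 (n+1), ∑ k ∈ Icc 1 m,
          μ k * μ (m+1) * Real.sin (phiAng θ (m+1) - phiAng θ k) :=
    sum_reorder (fun j k => μ j * μ k * Real.sin (phiAng θ k - phiAng θ j)) (n+1)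
  have hphi1 : phiAng θ 1 = θ 1 := by
    have := keystep 0
    rw [hphi0] at this
    linarith
  have hθ1 : 0 < θ 1 := (hθ 1 le_rfl (by omega)).1
  -- each fan term is nonnegative
  have hterm : ∀ m ∈ Icc 1 (n+1),
      0 ≤ ∑ k ∈ Icc 1 m, μ k * μ (m+1) * Real.sin (phiAng θ (m+1) - phiAng θ k) := by
    intro m hm
    simp only [Finset.mem_Icc] at hm
    by_cases hc : ∀ k ∈ Icc 1 m, phiAng θ (m+1) - phiAng θ k ≤ Real.pi
    · apply Finset.sum_nonneg
      intro k hk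
      simp only [Finset.mem_Icc] at hk
      have hk1 : 0 < μ k := hlam k hk.1 (by omega)
      have hk2 : 0 < μ (m+1) := hlam (m+1) (by omega) (by omega)
      have hsin : 0 ≤ Real.sin (phiAng θ (m+1) - phiAng θ k) :=
        Real.sin_nonneg_of_nonneg_of_le_pi
          (hposd k (m+1) (by omega) (by omega)).le
          (hc k (by simp only [Finset.mem_Icc]; omega))
      exact mul_nonneg (mul_nonneg hk1.le hk2.le) hsin
    · push_neg at hc
      obtain ⟨k0, hk0mem, hk0⟩ := hc
      simp only [Finset.mem_Icc] at hk0mem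
      have hsplitsum : (∑ k ∈ Icc 1 m, μ k * Real.sin (phiAng θ (m+1) - phiAng θ k))
          + (∑ k ∈ Icc (m+1) (n+2), μ k * Real.sin (phiAng θ (m+1) - phiAng θ k)) = 0 := by
        rw [show Icc 1 m = Ioc 0 m from Finset.Icc_add_one_left_eq_Ioc 0 m,
            show Icc (m+1) (n+2) = Ioc m (n+2) from Finset.Icc_add_one_left_eq_Ioc m (n+2),
            Finset.sum_Ioc_consecutive _ (Nat.zero_le m) (by omega : m ≤ n+2),
            show Ioc 0 (n+2) = Icc 1 (n+2) from (Finset.Icc_add_one_left_eq_Ioc 0 (n+2)).symm]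
        exact hDir (m+1)
      rw [Finset.Icc_eq_cons_Ioc (by omega : m+1 ≤ n+2), Finset.sum_cons, sub_self,
          Real.sin_zero, mul_zero, zero_add] at hsplitsum
      have hneg : (∑ k ∈ Ioc (m+1) (n+2), μ k * Real.sin (phiAng θ (m+1) - phiAng θ k))
          = -∑ k ∈ Ioc (m+1) (n+2), μ k * Real.sin (phiAng θ k - phiAng θ (m+1)) := by
        rw [← Finset.sum_neg_distrib]
        apply Finset.sum_congr rfl
        intro k _
        rw [show phiAng θ (m+1) - phiAng θ k = -(phiAng θ k - phiAng θ (m+1)) from by ring,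
            Real.sin_neg]
        ring
      have hmain : (∑ k ∈ Icc 1 m, μ k * Real.sin (phiAng θ (m+1) - phiAng θ k))
          = ∑ k ∈ Ioc (m+1) (n+2), μ k * Real.sin (phiAng θ k - phiAng θ (m+1)) := by
        rw [hneg] at hsplitsum
        linarith
      have hfactor : (∑ k ∈ Icc 1 m, μ k * μ (m+1) * Real.sin (phiAng θ (m+1) - phiAng θ k))
          = μ (m+1) * ∑ k ∈ Icc 1 m, μ k * Real.sin (phiAng θ (m+1) - phiAng θ k) := by
        rw [Finset.mul_sum]
        apply Finset.sum_congr rfl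
        intro k _
        ring
      rw [hfactor, hmain]
      have hmu' : 0 < μ (m+1) := hlam (m+1) (by omega) (by omega)
      apply mul_nonneg hmu'.le
      apply Finset.sum_nonneg
      intro k hk
      simp only [Finset.mem_Ioc] at hk
      have hk1 : 0 < μ k := hlam k (by omega) hk.2
      have hsin : 0 ≤ Real.sin (phiAng θ k - phiAng θ (m+1)) := by
        apply Real.sin_nonneg_of_nonneg_of_le_pi (hposd (m+1) k (by omega) hk.2).le
        have b1 : phiAng θ k ≤ phiAng θ (n+2) := hmono k (n+2) hk.2 le_rfl
        have b2 : phiAng θ 1 ≤ phiAng θ k0 := hmono 1 k0 hk0mem.1 (by omega)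
        linarith [Real.pi_pos]
      exact mul_nonneg hk1.le hsin
  -- the first fan term is positive
  have hone : 0 < ∑ k ∈ Icc 1 1, μ k * μ (1+1) * Real.sin (phiAng θ (1+1) - phiAng θ k) := by
    rw [Finset.Icc_self, Finset.sum_singleton, keystep 1]
    have hsin2 : 0 < Real.sin (θ (1+1)) :=
      Real.sin_pos_of_pos_of_lt_pi (hθ (1+1) (by omega) (by omega)).1
        (hθ (1+1) (by omega) (by omega)).2
    exact mul_pos (mul_pos (hlam 1 le_rfl (by omega)) (hlam (1+1) (by omega) (by omega))) hsin2
  have hsumpos : 0 < ∑ m ∈ Icc 1 (n+1), ∑ k ∈ Icc 1 m,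
      μ k * μ (m+1) * Real.sin (phiAng θ (m+1) - phiAng θ k) :=
    Finset.sum_pos' hterm ⟨1, by simp only [Finset.mem_Icc]; omega, hone⟩
  rw [← hP2, hP1] at hsumpos
  linarith

private lemma lamExt_neg (N : ℕ) (θ lam : ℕ → ℝ) (k : ℕ) :
    lamExt N θ (fun j => -lam j) k = -(lamExt N θ lam k) := by
  rw [lamExt, lamExt]
  split_ifs with h1 h2
  · rw [← Finset.sum_neg_distrib]
    exact Finset.sum_congr rfl fun j _ => by
      show vvec N θ j * (-lam j) = -(vvec N θ j * lam j)
      ring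
  · rw [← Finset.sum_neg_distrib]
    exact Finset.sum_congr rfl fun j _ => by
      show wvec N θ j * (-lam j) = -(wvec N θ j * lam j)
      ring
  · rfl

private lemma Qform_neg (N : ℕ) (θ lam : ℕ → ℝ) :
    Qform N θ (fun j => -lam j) = Qform N θ lam := by
  rw [Qform, Qform]
  congr 1
  · congr 1
    apply Finset.sum_congr rfl
    intro j _
    show _ * (-lam j)^2 = _ * (lam j)^2
    ring
  · apply Finset.sum_congr rfl
    intro j _
    apply Finset.sum_congr rfl
    intro k _
    show _ * (-lam j * -lam k) = _ * (lam j * lam k)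
    ring

/-- Under the positivity condition, if all (extended) side lengths are positive, or all are
negative, then the signed area is positive. -/
theorem stmt2 (N : ℕ) (hN : 3 ≤ N) (θ lam : ℕ → ℝ)
    (hθ : ∀ k, 1 ≤ k → k ≤ N → θ k ∈ Set.Ioo 0 Real.pi)
    (hsum : ∑ k ∈ Finset.Icc 1 N, θ k = 2 * Real.pi)
    (hlam : (∀ k, 1 ≤ k → k ≤ N → 0 < lamExt N θ lam k) ∨
            (∀ k, 1 ≤ k → k ≤ N → lamExt N θ lam k < 0)) :
    0 < Qform N θ lam := by
  obtain ⟨n, rfl⟩ : ∃ n, N = n + 2 := ⟨N - 2, by omega⟩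
  have hn : 1 ≤ n := by omega
  rcases hlam with hpos | hneg
  · exact main_pos n hn θ lam hθ hsum hpos
  · have hpos' : ∀ k, 1 ≤ k → k ≤ n+2 → 0 < lamExt (n+2) θ (fun j => -lam j) k := by
      intro k h1 h2
      rw [lamExt_neg]
      have := hneg k h1 h2
      linarith
    have h := main_pos n hn θ (fun j => -lam j) hθ hsum hpos'
    rwa [Qform_neg] at h
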